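/- Let Q be a hierarchical connected full CQ with q-tree τ_Q. For any atom S(ȳ) of Q and any variable x of Q with x ∉ {ȳ}, the set of variables shared with S(ȳ) is the same for all atoms below x in the q-tree: for every pair of distinct atom identifiers i, j that are descendants of x in τ_Q, {ȳ} ∩ {x̄_i} = {ȳ} ∩ {x̄_j}. -/

import Mathlib

/-- `u` is a leaf of the tree `t` (a prefix-closed finite set of `ℕ`-strings):
its only descendant in `t` is itself. -/
def IsLeafIn (t : Finset (List ℕ)) (u : List ℕ) : Prop :=
  ∀ v ∈ t, u <+: v → v = u

/-- A q-tree for a CQ with atoms `0, …, m-1` whose variable sets are given by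
`vars`: a finite prefix-closed tree of `ℕ`-strings with a labeling by atom
identifiers and variables, such that every variable labels exactly one inner
node, every atom identifier labels exactly one leaf, and for every leaf
labeled by atom `i`, the variables labeling the proper ancestors (the inner
nodes of the root-to-leaf path) are exactly the variables of atom `i`. -/
structure QTreeFor {m : ℕ} {V : Type*} (vars : Fin m → Finset V) where
  t : Finset (List ℕ)
  root_mem : [] ∈ t
  prefix_closed : ∀ u ∈ t, ∀ v : List ℕ, v <+: u → v ∈ t
  label : List ℕ → Fin m ⊕ V
  var_unique : ∀ x : V, ∃! u, u ∈ t ∧ ¬ IsLeafIn t u ∧ label u = Sum.inr x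
  atom_unique : ∀ i : Fin m, ∃! u, u ∈ t ∧ IsLeafIn t u ∧ label u = Sum.inl i
  path_vars : ∀ u ∈ t, ∀ i : Fin m, IsLeafIn t u → label u = Sum.inl i →
      ∀ x : V, x ∈ vars i ↔ ∃ v ∈ t, v ≠ u ∧ v <+: u ∧ label v = Sum.inr x

/-- A CQ (given by the variable sets of its atoms) is hierarchical iff for all
variables `x, y`, the sets of atoms containing them are comparable or
disjoint. -/
def Hierarchical {m : ℕ} {V : Type*} (vars : Fin m → Finset V) : Prop :=
  ∀ x y : V,
    {i : Fin m | x ∈ vars i} ⊆ {i : Fin m | y ∈ vars i} ∨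
    {i : Fin m | y ∈ vars i} ⊆ {i : Fin m | x ∈ vars i} ∨
    {i : Fin m | x ∈ vars i} ∩ {i : Fin m | y ∈ vars i} = ∅

/-- Let `Q` be a hierarchical connected full CQ with q-tree
`qt`, let `j` be an atom of `Q` and `x` a variable not occurring in atom `j`.
Then all atoms whose leaves lie below the node labeled `x` share the same
variables with atom `j`. -/
theorem shared_vars_constant_below {m : ℕ} {V : Type*} [DecidableEq V]
    (vars : Fin m → Finset V)
    (hH : Hierarchical vars)
    (hconn : ∃ x : V, ∀ i, x ∈ vars i)
    (hV : ∀ x : V, ∃ i, x ∈ vars i)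
    (qt : QTreeFor vars)
    (j : Fin m) (x : V) (hx : x ∉ vars j)
    (i₁ i₂ : Fin m) (hne : i₁ ≠ i₂)
    (ux u₁ u₂ : List ℕ)
    (hux : ux ∈ qt.t) (hlx : qt.label ux = Sum.inr x)
    (hu₁ : u₁ ∈ qt.t) (hleaf₁ : IsLeafIn qt.t u₁)
    (hlab₁ : qt.label u₁ = Sum.inl i₁) (hdesc₁ : ux <+: u₁)
    (hu₂ : u₂ ∈ qt.t) (hleaf₂ : IsLeafIn qt.t u₂)
    (hlab₂ : qt.label u₂ = Sum.inl i₂) (hdesc₂ : ux <+: u₂) :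
    vars j ∩ vars i₁ = vars j ∩ vars i₂ := by
  have hne₁ : ux ≠ u₁ := by intro h; rw [h, hlab₁] at hlx; exact Sum.inl_ne_inr hlx
  have hne₂ : ux ≠ u₂ := by intro h; rw [h, hlab₂] at hlx; exact Sum.inl_ne_inr hlx
  have hx₁ : x ∈ vars i₁ :=
    (qt.path_vars u₁ hu₁ i₁ hleaf₁ hlab₁ x).mpr ⟨ux, hux, hne₁, hdesc₁, hlx⟩
  have hx₂ : x ∈ vars i₂ :=
    (qt.path_vars u₂ hu₂ i₂ hleaf₂ hlab₂ x).mpr ⟨ux, hux, hne₂, hdesc₂, hlx⟩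
  have key : ∀ i₁' i₂' : Fin m, x ∈ vars i₁' → x ∈ vars i₂' →
      ∀ y ∈ vars j, y ∈ vars i₁' → y ∈ vars i₂' := by
    intro a b hxa hxb y hyj hya
    rcases hH x y with h | h | h
    · exact h hxb
    · exact absurd (h hyj) hx
    · have : a ∈ ({i : Fin m | x ∈ vars i} ∩ {i : Fin m | y ∈ vars i} : Set (Fin m)) :=
        ⟨hxa, hya⟩
      rw [h] at this
      exact this.elim
  ext y
  simp only [Finset.mem_inter]
  exact ⟨fun ⟨h1, h2⟩ => ⟨h1, key i₁ i₂ hx₁ hx₂ y h1 h2⟩,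
    fun ⟨h1, h2⟩ => ⟨h1, key i₂ i₁ hx₂ hx₁ y h1 h2⟩⟩
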